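/- Under the Basic Hypothesis (1 is a simple root of p(x) = x^m − ∑ αᵢ xⁱ and all other complex roots have modulus < 1), the powers A^n of the companion matrix converge to the rank-one matrix e λᵀ, where λ_k = a_k / ∑_{j=0}^{m-1} a_j and a_k = ∑_{i=0}^k αᵢ; i.e., every row of lim A^n equals (λ₀,...,λ_{m-1}). -/

import Mathlib

open Polynomial Filter
open scoped Matrix

section
attribute [local instance] Matrix.linftyOpNormedRing Matrix.linftyOpNormedAlgebra

theorem aux_pow_tendsto_zero (n : ℕ) (hn : 0 < n) (M : Matrix (Fin n) (Fin n) ℂ)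
    (h : ∀ μ ∈ spectrum ℂ M, ‖μ‖₊ < 1) :
    Tendsto (fun k => ‖M ^ k‖) atTop (nhds 0) := by
  have : Nonempty (Fin n) := Fin.pos_iff_nonempty.mp hn
  have hsr : spectralRadius ℂ M < 1 := by
    have := spectrum.spectralRadius_lt_of_forall_lt (a := M) (r := 1) h
    simpa using this
  obtain ⟨c, hc1, hc2⟩ := ENNReal.lt_iff_exists_nnreal_btwn.mp hsr
  have hc2' : c < 1 := by exact_mod_cast hc2
  have hg := spectrum.pow_nnnorm_pow_one_div_tendsto_nhds_spectralRadius M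
  have hev : ∀ᶠ k : ℕ in atTop, (‖M ^ k‖₊ : ENNReal) ^ (1 / (k:ℝ)) < (c : ENNReal) :=
    hg.eventually_lt_const hc1
  have hev2 : ∀ᶠ k : ℕ in atTop, ‖M ^ k‖ ≤ (c:ℝ) ^ k := by
    filter_upwards [hev, eventually_ge_atTop 1] with k hk hk1
    have hkr : (0:ℝ) < (k:ℝ) := by exact_mod_cast hk1
    have h2 := ENNReal.rpow_lt_rpow hk (z := (k:ℝ)) hkr
    rw [← ENNReal.rpow_mul, one_div, inv_mul_cancel₀ (ne_of_gt hkr), ENNReal.rpow_one,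
      ENNReal.rpow_natCast, ← ENNReal.coe_pow, ENNReal.coe_lt_coe] at h2
    have := h2.le
    rw [← NNReal.coe_le_coe] at this
    simpa using this
  have h0 : Tendsto (fun k : ℕ => (c:ℝ) ^ k) atTop (nhds 0) :=
    tendsto_pow_atTop_nhds_zero_of_lt_one c.coe_nonneg hc2'
  exact tendsto_of_tendsto_of_tendsto_of_le_of_le' tendsto_const_nhds h0
    (Eventually.of_forall fun k => norm_nonneg _) hev2
end

section
attribute [local instance] Matrix.linftyOpNormedRing Matrix.linftyOpNormedAlgebra

theorem aux_entry_tendsto_zero (n : ℕ) (hn : 0 < n) (M : Matrix (Fin n) (Fin n) ℂ)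
    (h : ∀ μ ∈ spectrum ℂ M, ‖μ‖₊ < 1) (i j : Fin n) :
    Tendsto (fun k => (M ^ k) i j) atTop (nhds 0) := by
  refine squeeze_zero_norm (fun k => ?_) (aux_pow_tendsto_zero n hn M h)
  have h1 : ‖(M ^ k) i j‖₊ ≤ ‖M ^ k‖₊ := by
    rw [Matrix.linfty_opNNNorm_def]
    refine le_trans ?_ (Finset.le_sup (f := fun i => ∑ j, ‖(M ^ k) i j‖₊) (Finset.mem_univ i))
    exact Finset.single_le_sum (f := fun j => ‖(M ^ k) i j‖₊) (fun _ _ => zero_le) (Finset.mem_univ j)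
  exact_mod_cast h1
end



/-- Under the Basic Hypothesis, Aⁿ → e λᵀ: every row of the limit is (λ₀,…,λ_{m-1}). -/
theorem stmt_16 (m : ℕ) (hm : 2 ≤ m) (α : ℕ → ℝ)
    (hα : ∀ i, i < m → 0 ≤ α i) (hsum : ∑ i ∈ Finset.range m, α i = 1)
    (hsimple : (X ^ m - ∑ i ∈ Finset.range m, C (α i) * X ^ i : Polynomial ℝ).rootMultiplicity 1 = 1)
    (hmod : ∀ z : ℂ,
      ((X ^ m - ∑ i ∈ Finset.range m, C (α i) * X ^ i : Polynomial ℝ).map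
        (algebraMap ℝ ℂ)).IsRoot z → z ≠ 1 → ‖z‖ < 1)
    (A : Matrix (Fin m) (Fin m) ℝ)
    (hA : ∀ i j : Fin m, A i j =
      if (i : ℕ) < m - 1 then (if (j : ℕ) = (i : ℕ) + 1 then 1 else 0) else α j)
    (a : ℕ → ℝ) (ha : ∀ k, a k = ∑ i ∈ Finset.range (k + 1), α i)
    (lam : ℕ → ℝ) (hlam : ∀ k, lam k = a k / ∑ j ∈ Finset.range m, a j) :
    Tendsto (fun n => A ^ n) atTop
      (nhds (Matrix.of fun _ j : Fin m => lam j)) := by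
  have hm1 : 1 ≤ m := le_trans (by norm_num) hm
  set S : ℝ := ∑ j ∈ Finset.range m, a j with hS
  have ham : a (m - 1) = 1 := by rw [ha, Nat.sub_add_cancel hm1, hsum]
  have hak : ∀ k, 0 ≤ a k → True := fun _ _ => trivial
  have hanonneg : ∀ k, k < m → 0 ≤ a k := by
    intro k hk
    rw [ha]
    exact Finset.sum_nonneg fun i hi => hα i (lt_of_lt_of_le (Finset.mem_range.mp hi) hk)
  have hSpos : (0:ℝ) < S := by
    have h1 : (1:ℝ) ≤ S := by
      rw [hS, ← ham]
      exact Finset.single_le_sum (fun i hi => hanonneg i (Finset.mem_range.mp hi))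
        (Finset.mem_range.mpr (by omega))
    linarith
  have hSne : S ≠ 0 := ne_of_gt hSpos
  -- lam sums to 1
  have hlamsum : ∑ k ∈ Finset.range m, lam k = 1 := by
    simp only [hlam]
    rw [← Finset.sum_div, ← hS, div_self hSne]
  -- a recurrence
  have harec : ∀ k, a (k + 1) = a k + α (k + 1) := by
    intro k; rw [ha, ha, Finset.sum_range_succ]
  -- left eigenvector
  have hlamA : ∀ j : Fin m, ∑ i : Fin m, lam i * A i j = lam j := by
    intro j
    have hconv : ∑ i : Fin m, lam i * A i j
        = ∑ i ∈ Finset.range m, lam i *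
          (if i < m - 1 then (if (j:ℕ) = i + 1 then 1 else 0) else α j) := by
      rw [Finset.sum_range fun i => _]
      · exact Finset.sum_congr rfl fun i _ => by rw [hA]
    rw [hconv]
    have hmsplit : Finset.range m = Finset.range ((m - 1) + 1) := by
      congr 1; omega
    rw [hmsplit, Finset.sum_range_succ, if_neg (lt_irrefl (m-1))]
    have hlast : lam (m - 1) = 1 / S := by rw [hlam, ham]
    by_cases hj : (j : ℕ) = 0
    · have : ∀ i ∈ Finset.range (m - 1),
          lam i * (if i < m - 1 then (if (j:ℕ) = i + 1 then 1 else 0) else α j) = 0 := by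
        intro i hi
        rw [if_pos (Finset.mem_range.mp hi), if_neg (by omega), mul_zero]
      rw [Finset.sum_eq_zero this, zero_add, hlast, hj, hlam, ha]
      rw [Finset.sum_range_one]
      ring
    · have hj1 : 1 ≤ (j : ℕ) := by omega
      have hjm : (j : ℕ) - 1 < m - 1 := by have := j.isLt; omega
      have : ∀ i ∈ Finset.range (m - 1),
          lam i * (if i < m - 1 then (if (j:ℕ) = i + 1 then 1 else 0) else α j)
          = if i = (j:ℕ) - 1 then lam i else 0 := by
        intro i hi
        rw [if_pos (Finset.mem_range.mp hi)]
        by_cases h : (j:ℕ) = i + 1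
        · rw [if_pos h, if_pos (by omega), mul_one]
        · rw [if_neg h, if_neg (by omega), mul_zero]
      rw [Finset.sum_congr rfl this, Finset.sum_ite_eq' (Finset.range (m-1)) ((j:ℕ)-1) lam,
        if_pos (Finset.mem_range.mpr hjm), hlast]
      have hja : a ((j:ℕ) - 1) + α (j:ℕ) = a (j:ℕ) := by
        have h2 := harec ((j:ℕ) - 1)
        rw [show ((j:ℕ) - 1 + 1) = (j:ℕ) by omega] at h2
        linarith
      rw [hlam ((j:ℕ)-1), hlam (j:ℕ)]
      field_simp
      linarith [hja]
  -- row sums of A are 1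
  have hrow : ∀ i : Fin m, ∑ j : Fin m, A i j = 1 := by
    intro i
    by_cases hi : (i:ℕ) < m - 1
    · have : ∀ j : Fin m, A i j = if (j:ℕ) = (i:ℕ) + 1 then 1 else 0 := by
        intro j; rw [hA, if_pos hi]
      rw [Finset.sum_congr rfl fun j _ => this j]
      have hconv : ∑ j : Fin m, (if (j:ℕ) = (i:ℕ)+1 then (1:ℝ) else 0)
          = ∑ j ∈ Finset.range m, (if j = (i:ℕ)+1 then (1:ℝ) else 0) := by
        rw [Finset.sum_range fun j => _]
      rw [hconv, Finset.sum_ite_eq' (Finset.range m) ((i:ℕ)+1) (fun _ => (1:ℝ)),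
        if_pos (Finset.mem_range.mpr (by omega))]
    · have : ∀ j : Fin m, A i j = α j := by intro j; rw [hA, if_neg hi]
      rw [Finset.sum_congr rfl fun j _ => this j,
        show (∑ j : Fin m, α (j:ℕ)) = ∑ j ∈ Finset.range m, α j from
          (Finset.sum_range fun j => α j).symm]
      exact hsum
  -- complexification
  set Ac : Matrix (Fin m) (Fin m) ℂ := Complex.ofRealHom.mapMatrix A with hAc
  set lc : Fin m → ℂ := fun k => ((lam k : ℝ) : ℂ) with hlc
  set Lc : Matrix (Fin m) (Fin m) ℂ := Matrix.of (fun _ j => lc j) with hLc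
  set Bc : Matrix (Fin m) (Fin m) ℂ := Ac - Lc with hBc
  have hAce : ∀ i j, Ac i j = ((A i j : ℝ) : ℂ) := fun i j => rfl
  have hrowc : ∀ i : Fin m, ∑ j : Fin m, Ac i j = 1 := by
    intro i
    simp only [hAce]
    rw [← Complex.ofReal_sum]
    rw [hrow i]
    exact Complex.ofReal_one
  have hcolc : ∀ j : Fin m, ∑ i : Fin m, lc i * Ac i j = lc j := by
    intro j
    simp only [hAce, hlc, ← Complex.ofReal_mul]
    rw [← Complex.ofReal_sum, hlamA j]
  have hsumlc : ∑ k : Fin m, lc k = 1 := by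
    simp only [hlc]
    rw [← Complex.ofReal_sum, show (∑ k : Fin m, lam (k:ℕ)) = ∑ k ∈ Finset.range m, lam k from
      (Finset.sum_range fun k => lam k).symm, hlamsum, Complex.ofReal_one]
  have hAL : Ac * Lc = Lc := by
    ext i j
    rw [Matrix.mul_apply]
    simp only [hLc, Matrix.of_apply]
    rw [← Finset.sum_mul, hrowc i, one_mul]
  have hLA : Lc * Ac = Lc := by
    ext i j
    rw [Matrix.mul_apply]
    simp only [hLc, Matrix.of_apply]
    exact hcolc j
  have hLL : Lc * Lc = Lc := by
    ext i j
    rw [Matrix.mul_apply]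
    simp only [hLc, Matrix.of_apply]
    rw [← Finset.sum_mul, hsumlc, one_mul]
  have hBL : Bc * Lc = 0 := by
    rw [hBc, Matrix.sub_mul, hAL, hLL, sub_self]
  have hBnL : ∀ n : ℕ, 1 ≤ n → Bc ^ n * Lc = 0 := by
    intro n hn
    obtain ⟨k, rfl⟩ := Nat.exists_eq_add_of_le hn
    rw [add_comm, pow_add, pow_one, mul_assoc, hBL, mul_zero]
  have hLB : Lc * Bc = 0 := by rw [hBc, Matrix.mul_sub, hLA, hLL, sub_self]
  have hdecomp : Ac = Bc + Lc := by rw [hBc, sub_add_cancel]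
  have hpow : ∀ n : ℕ, 1 ≤ n → Ac ^ n = Bc ^ n + Lc := by
    intro n hn
    induction n with
    | zero => omega
    | succ k ih =>
      rcases Nat.eq_or_lt_of_le hn with h1 | h1
      · rw [← h1, pow_one, pow_one, hdecomp]
      · have hk : 1 ≤ k := by omega
        rw [pow_succ, ih hk, hdecomp, add_mul, mul_add, mul_add,
          hBnL k hk, hLB, hLL, ← pow_succ]
        abel
  -- spectrum of Bc is inside the open unit disk
  have hspec : ∀ μ ∈ spectrum ℂ Bc, ‖μ‖₊ < 1 := by
    intro μ hμ
    by_cases hμ0 : μ = 0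
    · simp [hμ0]
    rw [spectrum.mem_iff] at hμ
    have hdet : (algebraMap ℂ (Matrix (Fin m) (Fin m) ℂ) μ - Bc).det = 0 := by
      by_contra hd
      exact hμ ((Matrix.isUnit_iff_isUnit_det _).mpr (isUnit_iff_ne_zero.mpr hd))
    obtain ⟨v, hv0, hveq⟩ := (Matrix.exists_mulVec_eq_zero_iff).mpr hdet
    have hBv : Bc.mulVec v = μ • v := by
      rw [Algebra.algebraMap_eq_smul_one, Matrix.sub_mulVec, Matrix.smul_mulVec,
        Matrix.one_mulVec] at hveq
      exact (sub_eq_zero.mp hveq).symm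
    have hLv : Lc.mulVec v = fun _ => (lc ⬝ᵥ v) := by
      funext i
      simp [hLc, Matrix.mulVec, dotProduct]
    have h1 : lc ⬝ᵥ (Ac.mulVec v) = lc ⬝ᵥ v := by
      rw [Matrix.dotProduct_mulVec]
      congr 1
      funext j
      have : (Matrix.vecMul lc Ac) j = ∑ i : Fin m, lc i * Ac i j := by
        simp [Matrix.vecMul, dotProduct]
      rw [this, hcolc j]
    have h2 : lc ⬝ᵥ (Lc.mulVec v) = lc ⬝ᵥ v := by
      rw [hLv, dotProduct]
      rw [← Finset.sum_mul, hsumlc, one_mul]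
    have hdot : μ * (lc ⬝ᵥ v) = 0 := by
      have h3 : lc ⬝ᵥ (Bc.mulVec v) = 0 := by
        rw [hBc, Matrix.sub_mulVec, dotProduct_sub, h1, h2, sub_self]
      rw [hBv] at h3
      rw [← h3, dotProduct_smul, smul_eq_mul]
    have hlcv : lc ⬝ᵥ v = 0 := by
      rcases mul_eq_zero.mp hdot with h | h
      · exact absurd h hμ0
      · exact h
    have hAv : Ac.mulVec v = μ • v := by
      have : Lc.mulVec v = 0 := by
        rw [hLv, hlcv]; rfl
      have h4 : Bc.mulVec v = Ac.mulVec v := by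
        rw [hBc, Matrix.sub_mulVec, this, sub_zero]
      rw [← h4, hBv]
    have hcomp : ∀ i : Fin m, ∑ j : Fin m, Ac i j * v j = μ * v i := by
      intro i
      have := congrFun hAv i
      simpa [Matrix.mulVec, dotProduct] using this
    have h0m : 0 < m := by omega
    have hstep : ∀ (k : ℕ) (hk1 : k + 1 < m), v ⟨k+1, hk1⟩ = μ * v ⟨k, by omega⟩ := by
      intro k hk1
      have hc := hcomp ⟨k, by omega⟩
      have hAentry : ∀ j : Fin m, Ac ⟨k, by omega⟩ j = if j = (⟨k+1, hk1⟩ : Fin m) then 1 else 0 := by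
        intro j
        rw [hAce, hA]
        simp only [if_pos (show k < m - 1 by omega)]
        by_cases hj : (j:ℕ) = k + 1
        · rw [if_pos hj, if_pos (by exact Fin.ext hj), Complex.ofReal_one]
        · rw [if_neg hj, if_neg (by intro hh; exact hj (by rw [hh]);), Complex.ofReal_zero]
      rw [Finset.sum_congr rfl fun j _ => by rw [hAentry j]] at hc
      simp only [ite_mul, one_mul, zero_mul] at hc
      rw [Finset.sum_ite_eq' Finset.univ (⟨k+1, hk1⟩ : Fin m) v, if_pos (Finset.mem_univ _)] at hc
      rw [hc]
    have hvk : ∀ (k : ℕ) (hk : k < m), v ⟨k, hk⟩ = μ ^ k * v ⟨0, h0m⟩ := by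
      intro k
      induction k with
      | zero => intro hk; simp
      | succ n ihn =>
        intro hk
        rw [hstep n hk, ihn (by omega), pow_succ]
        ring
    have hv00 : v ⟨0, h0m⟩ ≠ 0 := by
      intro h0
      apply hv0
      funext i
      have := hvk i.val i.isLt
      rw [h0, mul_zero] at this
      simpa using this
    have hne1 : μ ≠ 1 := by
      intro h1
      apply hv00
      have : lc ⬝ᵥ v = v ⟨0, h0m⟩ := by
        rw [dotProduct]
        have : ∀ i : Fin m, lc i * v i = lc i * v ⟨0, h0m⟩ := by
          intro i
          have hv := hvk i.val i.isLt
          rw [h1, one_pow, one_mul] at hv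
          rw [show (⟨i.val, i.isLt⟩ : Fin m) = i from Fin.eta i i.isLt] at hv
          rw [hv]
        rw [Finset.sum_congr rfl fun i _ => this i, ← Finset.sum_mul, hsumlc, one_mul]
      rw [← this, hlcv]
    have hrooteq : ∑ j : Fin m, (α (j:ℕ) : ℂ) * μ ^ (j:ℕ) = μ ^ m := by
      have hc := hcomp ⟨m - 1, by omega⟩
      have hAentry : ∀ j : Fin m, Ac ⟨m-1, by omega⟩ j = ((α (j:ℕ) : ℝ) : ℂ) := by
        intro j
        rw [hAce, hA]
        simp only [if_neg (lt_irrefl (m-1))]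
      rw [Finset.sum_congr rfl fun j _ => by rw [hAentry j]] at hc
      have hvj : ∀ j : Fin m, v j = μ ^ (j:ℕ) * v ⟨0, h0m⟩ := by
        intro j
        have := hvk j.val j.isLt
        rwa [show (⟨j.val, j.isLt⟩ : Fin m) = j from Fin.eta j j.isLt] at this
      rw [Finset.sum_congr rfl fun j _ => by rw [hvj j]] at hc
      rw [hvk (m-1) (by omega)] at hc
      have hc2 : (∑ j : Fin m, (α (j:ℕ) : ℂ) * μ ^ (j:ℕ)) * v ⟨0, h0m⟩
          = (μ ^ m) * v ⟨0, h0m⟩ := by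
        rw [Finset.sum_mul]
        have hre : ∀ j : Fin m, (α (j:ℕ) : ℂ) * μ ^ (j:ℕ) * v ⟨0, h0m⟩
            = (α (j:ℕ) : ℂ) * (μ ^ (j:ℕ) * v ⟨0, h0m⟩) := fun j => by ring
        rw [Finset.sum_congr rfl fun j _ => hre j, hc]
        rw [show μ * (μ ^ (m-1) * v ⟨0, h0m⟩) = μ ^ (m - 1 + 1) * v ⟨0, h0m⟩ by rw [pow_succ]; ring,
          show m - 1 + 1 = m by omega]
      exact mul_right_cancel₀ hv00 hc2
    have hroot : ((X ^ m - ∑ i ∈ Finset.range m, C (α i) * X ^ i : Polynomial ℝ).map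
        (algebraMap ℝ ℂ)).IsRoot μ := by
      have : ∑ j ∈ Finset.range m, (α j : ℂ) * μ ^ j = μ ^ m := by
        rw [show (∑ j ∈ Finset.range m, (α j : ℂ) * μ ^ j)
            = ∑ j : Fin m, (α (j:ℕ) : ℂ) * μ ^ (j:ℕ) from Finset.sum_range fun j => _]
        exact hrooteq
      simp only [Polynomial.IsRoot, Polynomial.eval_map, Polynomial.eval₂_sub,
        Polynomial.eval₂_pow, Polynomial.eval₂_X, Polynomial.eval₂_finset_sum,
        Polynomial.eval₂_mul, Polynomial.eval₂_C]
      simp only [Complex.coe_algebraMap]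
      rw [this]
      ring
    have habs := hmod μ hroot hne1
    exact_mod_cast habs
  -- entrywise convergence
  have hentry : ∀ i j : Fin m, Tendsto (fun n => (A ^ n) i j) atTop (nhds (lam (j:ℕ))) := by
    intro i j
    have hBt := aux_entry_tendsto_zero m (by omega) Bc hspec i j
    have hAt : Tendsto (fun n => (Ac ^ n) i j) atTop (nhds (lc j)) := by
      have h5 : Tendsto (fun n => (Bc ^ n) i j + lc j) atTop (nhds (0 + lc j)) :=
        hBt.add_const _
      rw [zero_add] at h5
      refine h5.congr' ?_
      filter_upwards [eventually_ge_atTop 1] with n hn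
      rw [hpow n hn, Matrix.add_apply]
      rfl
    have hcast : ∀ n : ℕ, ((A ^ n : Matrix (Fin m) (Fin m) ℝ) i j : ℂ) = (Ac ^ n) i j := by
      intro n
      rw [hAc, ← map_pow]
      rfl
    have hre : Tendsto (fun n => ((Ac ^ n) i j).re) atTop (nhds ((lc j).re)) :=
      (Complex.continuous_re.tendsto _).comp hAt
    simp only [← hcast, Complex.ofReal_re] at hre
    simpa [hlc] using hre
  refine tendsto_pi_nhds.mpr fun i => tendsto_pi_nhds.mpr fun j => ?_
  exact hentry i j
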